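/- Hessian test for being far from all means: let f be the p.d.f. of a mixture of k spherical Gaussians with parameters (w_j, μ_j, σ_j), j ∈ [k], where the j-th density is g_{μ_j,σ_j}(x) = σ_j^{-d}exp(−π‖x−μ_j‖²/σ_j²). If x ∈ ℝ^d satisfies ‖x − μ_j‖₂ > σ_j√(d/π) for every j, then the trace of the Hessian ∇²f(x) is strictly positive; in particular there exists a unit vector u with uᵀ(∇²f(x))u ≥ 2π·f(x)/max_j σ_j², so x is not a local maximum of f. -/

import Mathlib

open Real

/-- Hessian test: if a point `x` is at distance more than `σⱼ√(d/π)` from every mean of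
a mixture of spherical Gaussians, then the trace of the Hessian of the mixture density
at `x` is strictly positive, and there is a unit direction `u` along which the quadratic
form of the Hessian is at least `2π f(x)/σ_max²`; in particular `x` is not a local
maximum of the density. -/
theorem stmt_17 (d k : ℕ) (hd : 0 < d) (hk : 0 < k)
    (w : Fin k → ℝ) (μ : Fin k → EuclideanSpace ℝ (Fin d)) (σ : Fin k → ℝ)
    (hw : ∀ j, 0 < w j) (hwsum : ∑ j, w j = 1) (hσ : ∀ j, 0 < σ j)
    (σmax : ℝ) (hσmaxpos : 0 < σmax) (hσmax : ∀ j, σ j ≤ σmax)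
    (g : Fin k → EuclideanSpace ℝ (Fin d) → ℝ)
    (hg : ∀ j y, g j y = (σ j ^ d)⁻¹ * Real.exp (-π * ‖y - μ j‖ ^ 2 / σ j ^ 2))
    (x : EuclideanSpace ℝ (Fin d))
    (hx : ∀ j, σ j * Real.sqrt (d / π) < ‖x - μ j‖)
    (H : Matrix (Fin d) (Fin d) ℝ)
    (hH : ∀ r s, H r s = 4 * π ^ 2 * ∑ j, (w j / σ j ^ 2) * g j x *
        ((x - μ j) r * (x - μ j) s / σ j ^ 2 - (if r = s then 1 / (2 * π) else 0))) :
    0 < H.trace ∧ ∃ u : EuclideanSpace ℝ (Fin d), ‖u‖ = 1 ∧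
      2 * π * (∑ j, w j * g j x) / σmax ^ 2 ≤ ∑ r, ∑ s, u r * H r s * u s := by
  have hπ : (0:ℝ) < π := Real.pi_pos
  have hgpos : ∀ j, 0 < g j x := by
    intro j
    rw [hg]
    have := hσ j
    positivity
  -- norm squared as sum of squares
  have hnorm : ∀ j, ∑ r, ((x - μ j) r) * ((x - μ j) r) = ‖x - μ j‖ ^ 2 := by
    intro j
    rw [EuclideanSpace.norm_eq, Real.sq_sqrt (by positivity)]
    apply Finset.sum_congr rfl
    intro r _
    rw [Real.norm_eq_abs, sq_abs, sq]
  -- distance bound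
  have hdist : ∀ j, (d : ℝ) / (2 * π) < ‖x - μ j‖ ^ 2 / σ j ^ 2 - (d : ℝ) / (2 * π) := by
    intro j
    have hσj := hσ j
    have h1 : (σ j * Real.sqrt ((d:ℝ) / π)) ^ 2 < ‖x - μ j‖ ^ 2 :=
      pow_lt_pow_left₀ (hx j) (by positivity) two_ne_zero
    rw [mul_pow, Real.sq_sqrt (by positivity)] at h1
    have h2 : (d : ℝ) / π < ‖x - μ j‖ ^ 2 / σ j ^ 2 := by
      rw [lt_div_iff₀ (by positivity)]
      nlinarith
    have h3 : (d : ℝ) / π = (d:ℝ) / (2 * π) + (d:ℝ) / (2 * π) := by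
      field_simp; ring
    linarith
  -- trace formula
  have htrace : H.trace = 4 * π ^ 2 * ∑ j, (w j / σ j ^ 2) * g j x *
      (‖x - μ j‖ ^ 2 / σ j ^ 2 - (d : ℝ) / (2 * π)) := by
    rw [Matrix.trace]
    simp only [Matrix.diag, hH, if_pos rfl]
    rw [← Finset.mul_sum, Finset.sum_comm]
    congr 1
    apply Finset.sum_congr rfl
    intro j _
    rw [← Finset.mul_sum]
    congr 1
    rw [Finset.sum_sub_distrib, ← Finset.sum_div, hnorm, Finset.sum_const,
      Finset.card_univ, Fintype.card_fin, nsmul_eq_mul]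
    congr 1
    simp only [↓reduceIte]
    field_simp
  -- lower bound for trace
  have hkey : 2 * π * (∑ j, w j * g j x) / σmax ^ 2 * d ≤ H.trace := by
    rw [htrace]
    have step1 : ∀ j ∈ (Finset.univ : Finset (Fin k)),
        (w j / σmax ^ 2) * g j x * ((d : ℝ) / (2 * π)) ≤
        (w j / σ j ^ 2) * g j x * (‖x - μ j‖ ^ 2 / σ j ^ 2 - (d : ℝ) / (2 * π)) := by
      intro j _
      have hσj := hσ j
      have hwj := hw j
      have hgj := hgpos j
      have h1 : (w j / σmax ^ 2) ≤ (w j / σ j ^ 2) :=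
        div_le_div_of_nonneg_left hwj.le (by positivity)
          (by nlinarith [hσmax j, hσ j])
      have h2 := (hdist j).le
      have hd2 : (0:ℝ) ≤ (d : ℝ) / (2 * π) := by positivity
      calc (w j / σmax ^ 2) * g j x * ((d : ℝ) / (2 * π))
          ≤ (w j / σ j ^ 2) * g j x * ((d : ℝ) / (2 * π)) := by gcongr
        _ ≤ (w j / σ j ^ 2) * g j x * (‖x - μ j‖ ^ 2 / σ j ^ 2 - (d : ℝ) / (2 * π)) := by
            apply mul_le_mul_of_nonneg_left h2 (by positivity)
    have := Finset.sum_le_sum step1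
    calc 2 * π * (∑ j, w j * g j x) / σmax ^ 2 * d
        = 4 * π ^ 2 * ∑ j, (w j / σmax ^ 2) * g j x * ((d : ℝ) / (2 * π)) := by
          rw [Finset.mul_sum, Finset.sum_div, Finset.sum_mul, Finset.mul_sum]
          apply Finset.sum_congr rfl
          intro j _
          field_simp
          ring
      _ ≤ 4 * π ^ 2 * ∑ j, (w j / σ j ^ 2) * g j x *
            (‖x - μ j‖ ^ 2 / σ j ^ 2 - (d : ℝ) / (2 * π)) := by
          apply mul_le_mul_of_nonneg_left this (by positivity)
  have hfpos : 0 < ∑ j, w j * g j x := by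
    apply Finset.sum_pos
    · intro j _
      exact mul_pos (hw j) (hgpos j)
    · exact ⟨⟨0, hk⟩, Finset.mem_univ _⟩
  have hdpos : (0:ℝ) < d := Nat.cast_pos.mpr hd
  have hlbpos : 0 < 2 * π * (∑ j, w j * g j x) / σmax ^ 2 := by positivity
  constructor
  · calc (0:ℝ) < 2 * π * (∑ j, w j * g j x) / σmax ^ 2 * d := by positivity
      _ ≤ H.trace := hkey
  · -- find a good diagonal entry
    haveI : Nonempty (Fin d) := ⟨⟨0, hd⟩⟩
    have hsum : ∑ _i : Fin d, (2 * π * (∑ j, w j * g j x) / σmax ^ 2) ≤ ∑ i, H i i := by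
      rw [Finset.sum_const, Finset.card_univ, Fintype.card_fin, nsmul_eq_mul]
      calc (d : ℝ) * (2 * π * (∑ j, w j * g j x) / σmax ^ 2)
          = 2 * π * (∑ j, w j * g j x) / σmax ^ 2 * d := by ring
        _ ≤ H.trace := hkey
        _ = ∑ i, H i i := by rw [Matrix.trace]; rfl
    obtain ⟨i, _, hi⟩ := Finset.exists_le_of_sum_le Finset.univ_nonempty hsum
    refine ⟨EuclideanSpace.single i (1:ℝ), by simp, ?_⟩
    have hquad : ∑ r, ∑ s, (EuclideanSpace.single i (1:ℝ)) r * H r s *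
        (EuclideanSpace.single i (1:ℝ)) s = H i i := by
      simp [EuclideanSpace.single_apply]
    rw [hquad]
    exact hi
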